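/- Define S^(k) = sqrt(Σ_{l=0}^{k} ‖s̃^(l)‖²) and R^(k) = sqrt(Σ_{l=0}^{k} (‖mean(α^(l)·z^(l))‖² + ‖mean(β^(l)·s^(l))‖² + ‖g̃^(l+1)‖²)). If λ_s := β_max·(1 + r_β) < 1, then for every k ≥ 0, S^(k) ≤ μ_sr·R^(k) + μ_sc, where μ_sr = (√2/(1−λ_s))·(2 + r_β) and μ_sc = ‖s̃^(0)‖·sqrt(2/(1−λ_s²)). -/

import Mathlib

open scoped BigOperators
open Filter

noncomputable section

/-- Row-space: each agent holds a vector in ℝⁿ (Euclidean). -/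
abbrev Vec (n : ℕ) := EuclideanSpace ℝ (Fin n)

/-- A "matrix" in ℝ^{N×n}, represented row-wise. -/
abbrev Mat (N n : ℕ) := Fin N → Vec n

/-- Row-mean operator `B ↦ J·B` with `J = (1/N)·11ᵀ`. -/
def meanM {N n : ℕ} (B : Mat N n) : Mat N n := fun _ => (N : ℝ)⁻¹ • ∑ i, B i

/-- Consensus violation `B̃ = B − B̄`. -/
def tilde {N n : ℕ} (B : Mat N n) : Mat N n := B - meanM B

/-- Frobenius norm of a row-wise matrix. -/
def fnorm {N n : ℕ} (B : Mat N n) : ℝ := Real.sqrt (∑ i, ‖B i‖ ^ 2)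

/-- Spectral norm (ℓ₂ operator norm) of a square matrix. -/
def specNorm {N : ℕ} (A : Matrix (Fin N) (Fin N) ℝ) : ℝ :=
  ‖LinearMap.toContinuousLinearMap (Matrix.toEuclideanLin A)‖

/-- Action of an N×N matrix on a row-wise N×n matrix. -/
def Wact {N n : ℕ} (W : Matrix (Fin N) (Fin N) ℝ) (B : Mat N n) : Mat N n :=
  fun i => ∑ j, W i j • B j

/-- Action of a diagonal matrix `diag a` on a row-wise matrix. -/
def dAct {N n : ℕ} (a : Fin N → ℝ) (B : Mat N n) : Mat N n := fun i => a i • B i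

/-- The matrix of row-wise gradients: i-th row is `∇f_i(x_i)ᵀ`. -/
def gRow {N n : ℕ} (f : Fin N → Vec n → ℝ) (x : Mat N n) : Mat N n :=
  fun i => gradient (f i) (x i)

/-- The all-(1/N) matrix `J = (1/N)·11ᵀ`. -/
def Jmat (N : ℕ) : Matrix (Fin N) (Fin N) ℝ := Matrix.of fun _ _ => (N : ℝ)⁻¹

/-- Double stochasticity of `W`. -/
def DoublyStochastic {N : ℕ} (W : Matrix (Fin N) (Fin N) ℝ) : Prop :=
  (∀ i, ∑ j, W i j = 1) ∧ (∀ j, ∑ i, W i j = 1)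

namespace Aux

lemma fnorm_nonneg {N n : ℕ} (B : Mat N n) : 0 ≤ fnorm B := Real.sqrt_nonneg _

lemma fnorm_eq {N n : ℕ} (B : Mat N n) :
    fnorm B = ‖(WithLp.equiv 2 (Fin N → Vec n)).symm B‖ := by
  rw [fnorm, PiLp.norm_eq_of_L2]; rfl

lemma fnorm_add_le {N n : ℕ} (A B : Mat N n) : fnorm (A + B) ≤ fnorm A + fnorm B := by
  rw [fnorm_eq, fnorm_eq, fnorm_eq]
  exact norm_add_le ((WithLp.equiv 2 (Fin N → Vec n)).symm A)
    ((WithLp.equiv 2 (Fin N → Vec n)).symm B)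

lemma fnorm_neg {N n : ℕ} (B : Mat N n) : fnorm (-B) = fnorm B := by
  simp [fnorm]

lemma meanM_add {N n : ℕ} (A B : Mat N n) : meanM (A + B) = meanM A + meanM B := by
  funext i
  simp [meanM, Finset.sum_add_distrib, smul_add]

lemma tilde_add {N n : ℕ} (A B : Mat N n) : tilde (A + B) = tilde A + tilde B := by
  simp only [tilde, meanM_add]; abel

lemma tilde_neg {N n : ℕ} (B : Mat N n) : tilde (-B) = -(tilde B) := by
  funext i
  simp only [tilde, Pi.neg_apply, Pi.sub_apply, meanM, Finset.sum_neg_distrib, smul_neg]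
  abel

lemma sqrt_add_le' (x y : ℝ) (hx : 0 ≤ x) (hy : 0 ≤ y) :
    Real.sqrt (x + y) ≤ Real.sqrt x + Real.sqrt y := by
  calc Real.sqrt (x + y) ≤ Real.sqrt ((Real.sqrt x + Real.sqrt y) ^ 2) := by
        apply Real.sqrt_le_sqrt
        nlinarith [Real.sq_sqrt hx, Real.sq_sqrt hy,
          mul_nonneg (Real.sqrt_nonneg x) (Real.sqrt_nonneg y)]
  _ = Real.sqrt x + Real.sqrt y := Real.sqrt_sq (by positivity)

lemma fnorm_tilde_le {N n : ℕ} (hN : 1 ≤ N) (B : Mat N n) : fnorm (tilde B) ≤ fnorm B := by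
  apply Real.sqrt_le_sqrt
  have hN0 : ((N : ℝ)) ≠ 0 := by positivity
  set v : Vec n := (N : ℝ)⁻¹ • ∑ i, B i with hv
  have hB : ∀ i, B i = tilde B i + v := by
    intro i
    simp only [tilde, Pi.sub_apply, meanM, ← hv]
    abel
  have hsum : ∑ i, tilde B i = (0 : Vec n) := by
    simp only [tilde, Pi.sub_apply, meanM, ← hv]
    rw [Finset.sum_sub_distrib, Finset.sum_const, Finset.card_univ, Fintype.card_fin]
    rw [← Nat.cast_smul_eq_nsmul ℝ, hv, smul_smul, mul_inv_cancel₀ hN0, one_smul, sub_self]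
  have key : ∑ i, ‖B i‖ ^ 2
      = ∑ i, ‖tilde B i‖ ^ 2 + 2 * (inner ℝ (∑ i, tilde B i) v : ℝ) + (N : ℝ) * ‖v‖ ^ 2 := by
    have h1 : ∀ i : Fin N, ‖B i‖ ^ 2
        = ‖tilde B i‖ ^ 2 + 2 * (inner ℝ (tilde B i) v : ℝ) + ‖v‖ ^ 2 := by
      intro i
      conv_lhs => rw [hB i]
      exact norm_add_sq_real _ _
    rw [Finset.sum_congr rfl fun i _ => h1 i]
    rw [Finset.sum_add_distrib, Finset.sum_add_distrib, Finset.sum_const, Finset.card_univ,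
      Fintype.card_fin, nsmul_eq_mul, ← Finset.mul_sum, ← sum_inner]
  rw [key, hsum]
  simp only [inner_zero_left]
  have : 0 ≤ (N : ℝ) * ‖v‖ ^ 2 := by positivity
  linarith

lemma abs_le_specNorm_diag {N : ℕ} (d : Fin N → ℝ) (i : Fin N) :
    |d i| ≤ specNorm (Matrix.diagonal d) := by
  have h := ContinuousLinearMap.le_opNorm
    (LinearMap.toContinuousLinearMap (Matrix.toEuclideanLin (Matrix.diagonal d)))
    (EuclideanSpace.single i (1 : ℝ))
  have e1 : (LinearMap.toContinuousLinearMap (Matrix.toEuclideanLin (Matrix.diagonal d)))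
      (EuclideanSpace.single i (1 : ℝ)) = EuclideanSpace.single i (d i) := by
    show Matrix.toEuclideanLin (Matrix.diagonal d) (EuclideanSpace.single i (1 : ℝ)) = _
    rw [Matrix.toEuclideanLin_apply]
    have e2 : (EuclideanSpace.single i (1 : ℝ)).ofLp
        = Pi.single i (1 : ℝ) := rfl
    rw [e2, Matrix.diagonal_mulVec_single, mul_one]
    rfl
  rw [e1, EuclideanSpace.norm_single, EuclideanSpace.norm_single, norm_one, mul_one] at h
  have e3 : |d i| = ‖d i‖ := (Real.norm_eq_abs _).symm
  rw [e3]
  exact h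

lemma fnorm_dAct_le {N n : ℕ} (d : Fin N → ℝ) (c : ℝ) (hc : 0 ≤ c)
    (hd : ∀ i, |d i| ≤ c) (B : Mat N n) : fnorm (dAct d B) ≤ c * fnorm B := by
  rw [fnorm, fnorm, show c * Real.sqrt (∑ i, ‖B i‖ ^ 2)
      = Real.sqrt (c ^ 2 * ∑ i, ‖B i‖ ^ 2) by
    rw [Real.sqrt_mul (sq_nonneg c), Real.sqrt_sq hc]]
  apply Real.sqrt_le_sqrt
  rw [Finset.mul_sum]
  refine Finset.sum_le_sum fun i _ => ?_
  rw [show dAct d B i = d i • B i from rfl, norm_smul, Real.norm_eq_abs, mul_pow]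
  refine mul_le_mul_of_nonneg_right ?_ (sq_nonneg _)
  calc |d i| ^ 2 ≤ c ^ 2 := by nlinarith [hd i, abs_nonneg (d i)]

lemma fnorm_meanM {N n : ℕ} (C : Mat N n) :
    fnorm (meanM C) = Real.sqrt N * ‖(N : ℝ)⁻¹ • ∑ i, C i‖ := by
  rw [fnorm]
  have h1 : ∑ i : Fin N, ‖meanM C i‖ ^ 2 = (N : ℝ) * ‖(N : ℝ)⁻¹ • ∑ j, C j‖ ^ 2 := by
    simp only [meanM]
    rw [Finset.sum_const, Finset.card_univ, Fintype.card_fin, nsmul_eq_mul]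
  rw [h1, Real.sqrt_mul (by positivity), Real.sqrt_sq (norm_nonneg _)]

lemma third_bound {N n : ℕ} (hN : 1 ≤ N) (d : Fin N → ℝ) (hd0 : ∀ i, 0 ≤ d i)
    (c r : ℝ) (hdc : ∀ i, d i ≤ c)
    (hbar : 0 < (N : ℝ)⁻¹ * ∑ i, d i)
    (hr : c / ((N : ℝ)⁻¹ * ∑ i, d i) ≤ r)
    (B : Mat N n) :
    fnorm (tilde (dAct d (meanM B))) ≤ r * fnorm (meanM (dAct d B)) + r * c * fnorm (tilde B) := by
  have hNpos : (0 : ℝ) < N := by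
    have : (1 : ℝ) ≤ (N : ℝ) := by exact_mod_cast hN
    linarith
  set v : Vec n := (N : ℝ)⁻¹ • ∑ i, B i with hv
  set bb : ℝ := (N : ℝ)⁻¹ * ∑ i, d i with hbb
  set m : Vec n := (N : ℝ)⁻¹ • ∑ i, d i • B i with hm
  have hc0 : 0 ≤ c := le_trans (hd0 ⟨0, hN⟩) (hdc ⟨0, hN⟩)
  have hr0 : 0 ≤ r := le_trans (div_nonneg hc0 hbar.le) hr
  have hbc : bb ≤ c := by
    have h1 : ∑ i, d i ≤ (N : ℝ) * c := by
      calc ∑ i, d i ≤ ∑ _i : Fin N, c := Finset.sum_le_sum fun i _ => hdc i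
      _ = (N : ℝ) * c := by
        rw [Finset.sum_const, Finset.card_univ, Fintype.card_fin, nsmul_eq_mul]
    calc bb = (N : ℝ)⁻¹ * ∑ i, d i := rfl
    _ ≤ (N : ℝ)⁻¹ * ((N : ℝ) * c) := mul_le_mul_of_nonneg_left h1 (by positivity)
    _ = c := by field_simp
  -- (a) rows of the tilde
  have ha : ∀ i, tilde (dAct d (meanM B)) i = (d i - bb) • v := by
    intro i
    have h2 : meanM (dAct d (meanM B)) i = bb • v := by
      show (N : ℝ)⁻¹ • ∑ j, dAct d (meanM B) j = bb • v
      have : ∀ j, dAct d (meanM B) j = d j • v := fun j => rfl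
      rw [Finset.sum_congr rfl fun j _ => this j, ← Finset.sum_smul, smul_smul]
    show dAct d (meanM B) i - meanM (dAct d (meanM B)) i = _
    rw [h2, show dAct d (meanM B) i = d i • v from rfl, ← sub_smul]
  -- (b)
  have hb : fnorm (tilde (dAct d (meanM B))) ≤ Real.sqrt N * (c * ‖v‖) := by
    rw [fnorm]
    have h3 : ∑ i, ‖tilde (dAct d (meanM B)) i‖ ^ 2 ≤ (N : ℝ) * (c ^ 2 * ‖v‖ ^ 2) := by
      calc ∑ i, ‖tilde (dAct d (meanM B)) i‖ ^ 2
          ≤ ∑ _i : Fin N, c ^ 2 * ‖v‖ ^ 2 := by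
            refine Finset.sum_le_sum fun i _ => ?_
            rw [ha i, norm_smul, Real.norm_eq_abs, mul_pow, sq_abs]
            have h4 : (d i - bb) ^ 2 ≤ c ^ 2 := by
              nlinarith [hd0 i, hdc i, hbar.le, hbc, hc0]
            exact mul_le_mul_of_nonneg_right h4 (sq_nonneg _)
      _ = (N : ℝ) * (c ^ 2 * ‖v‖ ^ 2) := by
          rw [Finset.sum_const, Finset.card_univ, Fintype.card_fin, nsmul_eq_mul]
    calc Real.sqrt (∑ i, ‖tilde (dAct d (meanM B)) i‖ ^ 2)
        ≤ Real.sqrt ((N : ℝ) * (c ^ 2 * ‖v‖ ^ 2)) := Real.sqrt_le_sqrt h3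
    _ = Real.sqrt N * (c * ‖v‖) := by
        rw [Real.sqrt_mul (by positivity), show c ^ 2 * ‖v‖ ^ 2 = (c * ‖v‖) ^ 2 by ring,
          Real.sqrt_sq (by positivity)]
  -- (c)
  have hsplit : (∑ i, d i • B i) = (∑ i, d i • tilde B i) + (∑ i, d i) • v := by
    rw [Finset.sum_smul, ← Finset.sum_add_distrib]
    refine Finset.sum_congr rfl fun i _ => ?_
    rw [← smul_add]
    congr 1
    show B i = (B i - meanM B i) + v
    have : meanM B i = v := rfl
    rw [this]; abel
  have hkey : bb * ‖v‖ ≤ ‖m‖ + (N : ℝ)⁻¹ * (c * ∑ i, ‖tilde B i‖) := by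
    have e1 : m = (N : ℝ)⁻¹ • (∑ i, d i • tilde B i) + bb • v := by
      rw [hm, hsplit, smul_add, smul_smul]
    have e2 : bb * ‖v‖ = ‖bb • v‖ := by
      rw [norm_smul bb v, Real.norm_eq_abs, abs_of_nonneg hbar.le]
    have h3 : ‖∑ i, d i • tilde B i‖ ≤ c * ∑ i, ‖tilde B i‖ := by
      calc ‖∑ i, d i • tilde B i‖ ≤ ∑ i, ‖d i • tilde B i‖ := norm_sum_le _ _
      _ = ∑ i, d i * ‖tilde B i‖ := by
          refine Finset.sum_congr rfl fun i _ => ?_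
          rw [norm_smul, Real.norm_eq_abs, abs_of_nonneg (hd0 i)]
      _ ≤ ∑ i, c * ‖tilde B i‖ :=
          Finset.sum_le_sum fun i _ => mul_le_mul_of_nonneg_right (hdc i) (norm_nonneg _)
      _ = c * ∑ i, ‖tilde B i‖ := (Finset.mul_sum _ _ _).symm
    calc bb * ‖v‖ = ‖m - (N : ℝ)⁻¹ • ∑ i, d i • tilde B i‖ := by
          rw [e2]; congr 1; rw [e1]; abel
    _ ≤ ‖m‖ + ‖(N : ℝ)⁻¹ • ∑ i, d i • tilde B i‖ := norm_sub_le _ _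
    _ ≤ ‖m‖ + (N : ℝ)⁻¹ * (c * ∑ i, ‖tilde B i‖) := by
        refine add_le_add (le_refl _) ?_
        rw [norm_smul ((N:ℝ)⁻¹) (∑ i, d i • tilde B i), Real.norm_eq_abs,
          abs_of_nonneg (by positivity : (0:ℝ) ≤ (N:ℝ)⁻¹)]
        exact mul_le_mul_of_nonneg_left h3 (by positivity)
  have hCS : ∑ i, ‖tilde B i‖ ≤ Real.sqrt N * fnorm (tilde B) := by
    have h1 : (∑ i, ‖tilde B i‖) ^ 2 ≤ (N : ℝ) * ∑ i, ‖tilde B i‖ ^ 2 := by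
      have := sq_sum_le_card_mul_sum_sq (s := (Finset.univ : Finset (Fin N)))
        (f := fun i => ‖tilde B i‖)
      simpa using this
    calc ∑ i, ‖tilde B i‖ = Real.sqrt ((∑ i, ‖tilde B i‖) ^ 2) :=
          (Real.sqrt_sq (by positivity)).symm
    _ ≤ Real.sqrt ((N : ℝ) * ∑ i, ‖tilde B i‖ ^ 2) := Real.sqrt_le_sqrt h1
    _ = Real.sqrt N * fnorm (tilde B) := by rw [Real.sqrt_mul (by positivity), fnorm]
  have hmm' : fnorm (meanM (dAct d B)) = Real.sqrt N * ‖m‖ := by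
    rw [fnorm_meanM]
    congr 2
  have hfin : Real.sqrt N * (c * ‖v‖)
      ≤ r * fnorm (meanM (dAct d B)) + r * c * fnorm (tilde B) := by
    have hbv : bb * ‖v‖ ≤ ‖m‖ + (N : ℝ)⁻¹ * (c * (Real.sqrt N * fnorm (tilde B))) := by
      refine hkey.trans (add_le_add (le_refl _) ?_)
      exact mul_le_mul_of_nonneg_left (mul_le_mul_of_nonneg_left hCS hc0) (by positivity)
    have hsN : Real.sqrt N * Real.sqrt N = (N : ℝ) := Real.mul_self_sqrt hNpos.le
    have hbb0 : bb ≠ 0 := ne_of_gt hbar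
    have step1 : Real.sqrt N * (c * ‖v‖) = (c / bb) * (Real.sqrt N * (bb * ‖v‖)) := by
      field_simp
    rw [step1]
    have step2 : (c / bb) * (Real.sqrt N * (bb * ‖v‖))
        ≤ (c / bb) * (Real.sqrt N * (‖m‖ + (N : ℝ)⁻¹ * (c * (Real.sqrt N * fnorm (tilde B))))) :=
      mul_le_mul_of_nonneg_left
        (mul_le_mul_of_nonneg_left hbv (Real.sqrt_nonneg _))
        (div_nonneg hc0 hbar.le)
    refine step2.trans ?_
    have e5 : Real.sqrt N * (‖m‖ + (N : ℝ)⁻¹ * (c * (Real.sqrt N * fnorm (tilde B))))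
        = Real.sqrt N * ‖m‖ + c * fnorm (tilde B) := by
      rw [mul_add]
      congr 1
      rw [show Real.sqrt ↑N * ((N:ℝ)⁻¹ * (c * (Real.sqrt ↑N * fnorm (tilde B))))
          = (Real.sqrt ↑N * Real.sqrt ↑N) * ((N:ℝ)⁻¹ * (c * fnorm (tilde B))) by ring, hsN]
      rw [← mul_assoc, mul_inv_cancel₀ (ne_of_gt hNpos), one_mul]
    rw [e5]
    have h6 : (c / bb) * (Real.sqrt N * ‖m‖ + c * fnorm (tilde B))
        ≤ r * (Real.sqrt N * ‖m‖ + c * fnorm (tilde B)) := by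
      apply mul_le_mul_of_nonneg_right hr
      have := fnorm_nonneg (tilde B)
      positivity
    refine h6.trans (le_of_eq ?_)
    rw [hmm']
    ring
  exact hb.trans hfin

lemma sq_step {lam a b e : ℝ} (hlam0 : 0 ≤ lam) (hlam1 : lam < 1) (ha : 0 ≤ a) (he : 0 ≤ e)
    (hb : 0 ≤ b) (h : b ≤ lam * a + e) :
    b ^ 2 ≤ lam * a ^ 2 + e ^ 2 / (1 - lam) := by
  have h1 : (0:ℝ) < 1 - lam := by linarith
  have hb2 : b ^ 2 ≤ (lam * a + e) ^ 2 := by nlinarith [mul_nonneg hlam0 ha]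
  refine hb2.trans ?_
  rw [← sub_nonneg]
  have e1 : lam * a ^ 2 + e ^ 2 / (1 - lam) - (lam * a + e) ^ 2
      = lam * ((1 - lam) * a - e) ^ 2 / (1 - lam) := by
    field_simp
    ring
  rw [e1]
  exact div_nonneg (mul_nonneg hlam0 (sq_nonneg _)) h1.le

lemma sum_rec {lam : ℝ} (hlam0 : 0 ≤ lam) (hlam1 : lam < 1) (c E : ℕ → ℝ)
    (hc : ∀ l, 0 ≤ c l) (hE : ∀ l, 0 ≤ E l)
    (hrec : ∀ l, c (l + 1) ≤ lam * c l + E l / (1 - lam)) :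
    ∀ k, ∑ l ∈ Finset.range (k + 1), c l + (lam / (1 - lam)) * c k
      ≤ c 0 / (1 - lam) + (∑ l ∈ Finset.range k, E l) / (1 - lam) ^ 2 := by
  have h1 : (0:ℝ) < 1 - lam := by linarith
  intro k
  induction k with
  | zero =>
    have e0 : ∑ l ∈ Finset.range (0 + 1), c l = c 0 := by simp
    have e1 : c 0 + lam / (1 - lam) * c 0 = c 0 / (1 - lam) := by field_simp; ring
    rw [e0]
    simp only [Finset.range_zero, Finset.sum_empty, zero_div]
    linarith
  | succ k ih =>
    have h2 := hrec k
    have e1 : c (k + 1) + lam / (1 - lam) * c (k + 1) = (1 - lam)⁻¹ * c (k + 1) := by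
      field_simp
      ring
    have h4 := mul_le_mul_of_nonneg_left h2 (inv_nonneg.mpr h1.le)
    have e2 : (1 - lam)⁻¹ * (lam * c k + E k / (1 - lam))
        = lam / (1 - lam) * c k + E k / (1 - lam) ^ 2 := by
      field_simp
    rw [e2] at h4
    have e3 : ∑ l ∈ Finset.range (k + 1 + 1), c l
        = ∑ l ∈ Finset.range (k + 1), c l + c (k + 1) := Finset.sum_range_succ _ _
    have e4 : ∑ l ∈ Finset.range (k + 1), E l
        = ∑ l ∈ Finset.range k, E l + E k := Finset.sum_range_succ _ _
    have e5 : (∑ l ∈ Finset.range k, E l + E k) / (1 - lam) ^ 2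
        = (∑ l ∈ Finset.range k, E l) / (1 - lam) ^ 2 + E k / (1 - lam) ^ 2 :=
      add_div _ _ _
    rw [e3, e4, e5]
    linarith

end Aux

set_option maxHeartbeats 1000000 in
/-- With `S^(k) = sqrt(Σ_{l≤k}‖s̃^(l)‖²)` and
`R^(k) = sqrt(Σ_{l≤k}(‖mean(α^(l)z^(l))‖² + ‖mean(β^(l)s^(l))‖² + ‖g̃^(l+1)‖²))`, if
`λ_s = β_max(1+r_β) < 1` then `S^(k) ≤ μ_sr·R^(k) + μ_sc` with
`μ_sr = (√2/(1−λ_s))(2+r_β)` and `μ_sc = ‖s̃^(0)‖·sqrt(2/(1−λ_s²))`. -/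
theorem stmt9 (N n : ℕ) (hN : 1 ≤ N) (hn : 1 ≤ n)
    (W : Matrix (Fin N) (Fin N) ℝ) (hW : DoublyStochastic W)
    (f : Fin N → Vec n → ℝ) (hf : ∀ i, Differentiable ℝ (f i))
    (α β : ℕ → Fin N → ℝ) (hα : ∀ k i, 0 ≤ α k i) (hβ : ∀ k i, 0 ≤ β k i)
    (hβbar : ∀ k, 0 < (N : ℝ)⁻¹ * ∑ i, β k i)
    (βmax rβ : ℝ)
    (hβmax : ∀ k, specNorm (Matrix.diagonal (β k)) ≤ βmax)
    (hrβ : ∀ k, βmax / ((N : ℝ)⁻¹ * ∑ i, β k i) ≤ rβ)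
    (hlams : βmax * (1 + rβ) < 1)
    (x s z : ℕ → Mat N n)
    (hx : ∀ k, x (k + 1) = Wact W (x k + dAct (α k) (z k)))
    (hs : ∀ k, s (k + 1) = -(gRow f (x (k + 1))) + dAct (β k) (s k))
    (hz : ∀ k, z (k + 1) = Wact W (z k + s (k + 1) - s k)) :
    ∀ k, Real.sqrt (∑ l ∈ Finset.range (k + 1), fnorm (tilde (s l)) ^ 2) ≤
      (Real.sqrt 2 / (1 - βmax * (1 + rβ))) * (2 + rβ) *
          Real.sqrt (∑ l ∈ Finset.range (k + 1),
            (fnorm (meanM (dAct (α l) (z l))) ^ 2 + fnorm (meanM (dAct (β l) (s l))) ^ 2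
              + fnorm (tilde (gRow f (x (l + 1)))) ^ 2))
        + fnorm (tilde (s 0)) * Real.sqrt (2 / (1 - (βmax * (1 + rβ)) ^ 2)) := by
  intro k
  set lam : ℝ := βmax * (1 + rβ) with hlam
  have hβmax0 : 0 ≤ βmax :=
    le_trans (abs_nonneg _) (le_trans (Aux.abs_le_specNorm_diag (β 0) ⟨0, hN⟩) (hβmax 0))
  have hrβ0 : 0 ≤ rβ := le_trans (div_nonneg hβmax0 (hβbar 0).le) (hrβ 0)
  have hlam0 : 0 ≤ lam := mul_nonneg hβmax0 (by linarith)
  have hlam1 : lam < 1 := hlams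
  have h1l : (0 : ℝ) < 1 - lam := by linarith
  have habs : ∀ l i, |β l i| ≤ βmax := fun l i =>
    le_trans (Aux.abs_le_specNorm_diag (β l) i) (hβmax l)
  have hβle : ∀ l i, β l i ≤ βmax := fun l i => le_trans (le_abs_self _) (habs l i)
  -- the one-step contraction inequality
  have hstep : ∀ l, fnorm (tilde (s (l + 1))) ≤ lam * fnorm (tilde (s l))
      + (fnorm (tilde (gRow f (x (l + 1)))) + rβ * fnorm (meanM (dAct (β l) (s l)))) := by
    intro l
    have hdecomp : s (l + 1) = (-(gRow f (x (l + 1))) + dAct (β l) (tilde (s l)))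
        + dAct (β l) (meanM (s l)) := by
      rw [hs l]
      funext i
      simp only [Pi.add_apply, Pi.neg_apply, dAct, tilde, Pi.sub_apply, smul_sub]
      abel
    have h1 : tilde (s (l + 1)) = (tilde (-(gRow f (x (l + 1))))
        + tilde (dAct (β l) (tilde (s l)))) + tilde (dAct (β l) (meanM (s l))) := by
      rw [hdecomp, Aux.tilde_add, Aux.tilde_add]
    have b1 : fnorm (tilde (-(gRow f (x (l + 1))))) = fnorm (tilde (gRow f (x (l + 1)))) := by
      rw [Aux.tilde_neg, Aux.fnorm_neg]
    have b2 : fnorm (tilde (dAct (β l) (tilde (s l)))) ≤ βmax * fnorm (tilde (s l)) :=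
      le_trans (Aux.fnorm_tilde_le hN _) (Aux.fnorm_dAct_le (β l) βmax hβmax0 (habs l) _)
    have b3 : fnorm (tilde (dAct (β l) (meanM (s l))))
        ≤ rβ * fnorm (meanM (dAct (β l) (s l))) + rβ * βmax * fnorm (tilde (s l)) :=
      Aux.third_bound hN (β l) (hβ l) βmax rβ (hβle l) (hβbar l) (hrβ l) (s l)
    have hexp : lam * fnorm (tilde (s l)) = βmax * fnorm (tilde (s l))
        + rβ * (βmax * fnorm (tilde (s l))) := by rw [hlam]; ring
    calc fnorm (tilde (s (l + 1)))
        ≤ fnorm (tilde (-(gRow f (x (l + 1)))) + tilde (dAct (β l) (tilde (s l))))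
          + fnorm (tilde (dAct (β l) (meanM (s l)))) := by
          rw [h1]; exact Aux.fnorm_add_le _ _
    _ ≤ (fnorm (tilde (-(gRow f (x (l + 1))))) + fnorm (tilde (dAct (β l) (tilde (s l)))))
          + fnorm (tilde (dAct (β l) (meanM (s l)))) :=
          add_le_add (Aux.fnorm_add_le _ _) (le_refl _)
    _ ≤ _ := by rw [b1]; linarith [b2, b3, hexp]
  -- scalar recursion on squares
  have hrec : ∀ l, fnorm (tilde (s (l + 1))) ^ 2 ≤ lam * fnorm (tilde (s l)) ^ 2
      + (fnorm (tilde (gRow f (x (l + 1)))) + rβ * fnorm (meanM (dAct (β l) (s l)))) ^ 2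
        / (1 - lam) := by
    intro l
    refine Aux.sq_step hlam0 hlam1 (Aux.fnorm_nonneg _) ?_ (Aux.fnorm_nonneg _) (hstep l)
    have := Aux.fnorm_nonneg (tilde (gRow f (x (l + 1))))
    have := Aux.fnorm_nonneg (meanM (dAct (β l) (s l)))
    positivity
  have hT := Aux.sum_rec hlam0 hlam1 (fun l => fnorm (tilde (s l)) ^ 2)
    (fun l => (fnorm (tilde (gRow f (x (l + 1)))) + rβ * fnorm (meanM (dAct (β l) (s l)))) ^ 2)
    (fun l => sq_nonneg _) (fun l => sq_nonneg _) hrec k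
  set E : ℕ → ℝ := fun l =>
    (fnorm (tilde (gRow f (x (l + 1)))) + rβ * fnorm (meanM (dAct (β l) (s l)))) ^ 2 with hE
  have hnum : (∑ l ∈ Finset.range k, E l) ≤ ∑ l ∈ Finset.range (k + 1), E l := by
    refine Finset.sum_le_sum_of_subset_of_nonneg
      (Finset.range_subset_range.mpr (Nat.le_succ k)) fun i _ _ => sq_nonneg _
  have hT2 : (∑ l ∈ Finset.range (k + 1), fnorm (tilde (s l)) ^ 2)
      ≤ fnorm (tilde (s 0)) ^ 2 / (1 - lam)
        + (∑ l ∈ Finset.range (k + 1), E l) / (1 - lam) ^ 2 := by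
    have hdrop : 0 ≤ (lam / (1 - lam)) * fnorm (tilde (s k)) ^ 2 := by
      have := sq_nonneg (fnorm (tilde (s k)))
      have h9 : 0 ≤ lam / (1 - lam) := div_nonneg hlam0 h1l.le
      positivity
    have hmono : (∑ l ∈ Finset.range k, E l) / (1 - lam) ^ 2
        ≤ (∑ l ∈ Finset.range (k + 1), E l) / (1 - lam) ^ 2 :=
      (div_le_div_iff_of_pos_right (by positivity)).mpr hnum
    linarith [hT]
  -- abbreviate R2
  set R2 : ℝ := ∑ l ∈ Finset.range (k + 1),
    (fnorm (meanM (dAct (α l) (z l))) ^ 2 + fnorm (meanM (dAct (β l) (s l))) ^ 2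
      + fnorm (tilde (gRow f (x (l + 1)))) ^ 2) with hR2
  have hR2nn : 0 ≤ R2 := by
    rw [hR2]
    refine Finset.sum_nonneg fun l _ => ?_
    positivity
  have hEb : (∑ l ∈ Finset.range (k + 1), E l) ≤ (1 + rβ) ^ 2 * R2 := by
    rw [hR2, Finset.mul_sum]
    refine Finset.sum_le_sum fun l _ => ?_
    have h1 := Aux.fnorm_nonneg (tilde (gRow f (x (l + 1))))
    have h2 := Aux.fnorm_nonneg (meanM (dAct (β l) (s l)))
    have h3 := sq_nonneg (fnorm (meanM (dAct (α l) (z l))))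
    simp only [hE]
    set g1 : ℝ := fnorm (tilde (gRow f (x (l + 1)))) with hg1
    set m1 : ℝ := fnorm (meanM (dAct (β l) (s l))) with hm1
    nlinarith [mul_nonneg hrβ0 (sq_nonneg (g1 - m1)), sq_nonneg m1,
      mul_nonneg hrβ0 (sq_nonneg m1), mul_nonneg hrβ0 (sq_nonneg g1),
      mul_nonneg (mul_nonneg hrβ0 hrβ0) (sq_nonneg g1), h3,
      mul_nonneg hrβ0 h3, mul_nonneg (mul_nonneg hrβ0 hrβ0) h3]
  -- take square roots
  have hsqrtT : Real.sqrt (∑ l ∈ Finset.range (k + 1), fnorm (tilde (s l)) ^ 2)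
      ≤ Real.sqrt (fnorm (tilde (s 0)) ^ 2 / (1 - lam))
        + Real.sqrt ((∑ l ∈ Finset.range (k + 1), E l) / (1 - lam) ^ 2) := by
    refine le_trans (Real.sqrt_le_sqrt hT2) (Aux.sqrt_add_le' _ _ ?_ ?_)
    · exact div_nonneg (sq_nonneg _) h1l.le
    · exact div_nonneg (Finset.sum_nonneg fun l _ => sq_nonneg _) (sq_nonneg _)
  have hs2 : Real.sqrt ((∑ l ∈ Finset.range (k + 1), E l) / (1 - lam) ^ 2)
      = Real.sqrt (∑ l ∈ Finset.range (k + 1), E l) / (1 - lam) := by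
    rw [Real.sqrt_div (Finset.sum_nonneg fun l _ => sq_nonneg _),
      Real.sqrt_sq h1l.le]
  have hs3 : Real.sqrt (∑ l ∈ Finset.range (k + 1), E l) ≤ (1 + rβ) * Real.sqrt R2 := by
    calc Real.sqrt (∑ l ∈ Finset.range (k + 1), E l)
        ≤ Real.sqrt ((1 + rβ) ^ 2 * R2) := Real.sqrt_le_sqrt hEb
    _ = (1 + rβ) * Real.sqrt R2 := by
        rw [Real.sqrt_mul (sq_nonneg _), Real.sqrt_sq (by linarith : (0:ℝ) ≤ 1 + rβ)]
  have h1l2 : (0 : ℝ) < 1 - lam ^ 2 := by nlinarith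
  have hfrac : 1 / (1 - lam) ≤ 2 / (1 - lam ^ 2) := by
    rw [div_le_div_iff₀ h1l h1l2]
    nlinarith
  have hfirst : Real.sqrt (fnorm (tilde (s 0)) ^ 2 / (1 - lam))
      ≤ fnorm (tilde (s 0)) * Real.sqrt (2 / (1 - lam ^ 2)) := by
    rw [show fnorm (tilde (s 0)) ^ 2 / (1 - lam)
        = fnorm (tilde (s 0)) ^ 2 * (1 / (1 - lam)) by ring,
      Real.sqrt_mul (sq_nonneg _), Real.sqrt_sq (Aux.fnorm_nonneg _)]
    exact mul_le_mul_of_nonneg_left (Real.sqrt_le_sqrt hfrac) (Aux.fnorm_nonneg _)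
  have hcoef : (1 + rβ) ≤ Real.sqrt 2 * (2 + rβ) := by
    have h2 : (1 : ℝ) ≤ Real.sqrt 2 := by
      rw [show (1 : ℝ) = Real.sqrt 1 by rw [Real.sqrt_one]]
      exact Real.sqrt_le_sqrt (by norm_num)
    have h3 : (2 + rβ) ≤ Real.sqrt 2 * (2 + rβ) := le_mul_of_one_le_left (by linarith) h2
    linarith
  have hsecond : Real.sqrt (∑ l ∈ Finset.range (k + 1), E l) / (1 - lam)
      ≤ Real.sqrt 2 / (1 - lam) * (2 + rβ) * Real.sqrt R2 := by
    have hX : 0 ≤ Real.sqrt R2 := Real.sqrt_nonneg _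
    have h7 : Real.sqrt (∑ l ∈ Finset.range (k + 1), E l)
        ≤ Real.sqrt 2 * (2 + rβ) * Real.sqrt R2 := by
      refine hs3.trans ?_
      exact mul_le_mul_of_nonneg_right hcoef hX
    calc Real.sqrt (∑ l ∈ Finset.range (k + 1), E l) / (1 - lam)
        ≤ Real.sqrt 2 * (2 + rβ) * Real.sqrt R2 / (1 - lam) :=
          (div_le_div_iff_of_pos_right h1l).mpr h7
    _ = Real.sqrt 2 / (1 - lam) * (2 + rβ) * Real.sqrt R2 := by ring
  calc Real.sqrt (∑ l ∈ Finset.range (k + 1), fnorm (tilde (s l)) ^ 2)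
      ≤ Real.sqrt (fnorm (tilde (s 0)) ^ 2 / (1 - lam))
        + Real.sqrt (∑ l ∈ Finset.range (k + 1), E l) / (1 - lam) := by
        rw [← hs2]; exact hsqrtT
  _ ≤ fnorm (tilde (s 0)) * Real.sqrt (2 / (1 - lam ^ 2))
        + Real.sqrt 2 / (1 - lam) * (2 + rβ) * Real.sqrt R2 :=
        add_le_add hfirst hsecond
  _ = Real.sqrt 2 / (1 - lam) * (2 + rβ) * Real.sqrt R2
        + fnorm (tilde (s 0)) * Real.sqrt (2 / (1 - lam ^ 2)) := by ring
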